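/- Let M, a, s be positive integers with M > 1 such that ∑_{i=0}^{M-1} (a+i)^2 = s^2. If M = 12·m₁ + 11 for a nonnegative integer m₁, then for every integer i ≥ 1 one has m₁ ≢ 3^(2i-1) − 1 (mod 3^(2i)) and m₁ ≢ 2·3^(2i-1) − 1 (mod 3^(2i)). -/

import Mathlib

lemma sq_mod_three (x : ℕ) (h : ¬ 3 ∣ x) : x ^ 2 % 3 = 1 := by
  have h1 : x % 3 = 1 ∨ x % 3 = 2 := by omega
  rw [Nat.pow_mod]
  rcases h1 with h | h <;> simp [h]

lemma aux_sq (s B t : ℕ) (hB : ¬ 3 ∣ B) (h : s ^ 2 = 3 ^ t * B) :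
    2 ∣ t ∧ B % 3 = 1 := by
  haveI : Fact (Nat.Prime 3) := ⟨by norm_num⟩
  have hB0 : B ≠ 0 := by rintro rfl; exact hB (dvd_zero 3)
  have hs0 : s ≠ 0 := by
    rintro rfl
    have : (3:ℕ) ^ t * B ≠ 0 := Nat.mul_ne_zero (pow_ne_zero t (by norm_num)) hB0
    simp at h
    omega
  have hv : padicValNat 3 (s ^ 2) = t := by
    rw [h, padicValNat.mul (pow_ne_zero t (by norm_num)) hB0,
      padicValNat.prime_pow, padicValNat.eq_zero_of_not_dvd hB, add_zero]
  rw [padicValNat.pow s 2] at hv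
  set u := padicValNat 3 s with hu
  have ht : t = 2 * u := hv.symm
  obtain ⟨s', hs'⟩ := pow_padicValNat_dvd (p := 3) (n := s)
  rw [← hu] at hs'
  have hss : s' ^ 2 = B := by
    have h2 : (3:ℕ) ^ (2 * u) * s' ^ 2 = 3 ^ (2 * u) * B :=
      calc (3:ℕ) ^ (2 * u) * s' ^ 2 = (3 ^ u * s') ^ 2 := by ring
        _ = s ^ 2 := by rw [hs']
        _ = 3 ^ t * B := h
        _ = 3 ^ (2 * u) * B := by rw [ht]
    exact Nat.eq_of_mul_eq_mul_left (pow_pos (by norm_num) _) h2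
  have hs3 : ¬ 3 ∣ s' := fun hd => hB (hss ▸ Dvd.dvd.pow hd (by norm_num))
  exact ⟨⟨u, ht⟩, hss ▸ sq_mod_three s' hs3⟩

lemma sum_sq_identity (a M : ℕ) :
    12 * ∑ i ∈ Finset.range M, ((a : ℤ) + i) ^ 2
      = M * (3 * (2 * a + M - 1) ^ 2 + M ^ 2 - 1) := by
  induction M with
  | zero => simp
  | succ m ih =>
    rw [Finset.sum_range_succ, mul_add, ih]
    push_cast
    ring

lemma key_identity (M a s m₁ : ℕ)
    (hsum : ∑ i ∈ Finset.range M, (a + i) ^ 2 = s ^ 2)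
    (hMeq : M = 12 * m₁ + 11) :
    s ^ 2 = (12 * m₁ + 11) * ((a + 6 * m₁ + 5) ^ 2 + 2 * (6 * m₁ + 5) * (m₁ + 1)) := by
  have h := sum_sq_identity a M
  have hc : ((∑ i ∈ Finset.range M, (a + i) ^ 2 : ℕ) : ℤ)
      = ∑ i ∈ Finset.range M, ((a : ℤ) + i) ^ 2 := by
    push_cast; rfl
  rw [hsum] at hc
  rw [← hc, hMeq] at h
  have h12 : (12 : ℤ) * (s ^ 2 : ℤ)
      = 12 * ((12 * m₁ + 11) * ((a + 6 * m₁ + 5) ^ 2 + 2 * (6 * m₁ + 5) * (m₁ + 1))) := by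
    push_cast at h ⊢
    linarith [h]
  have := mul_left_cancel₀ (by norm_num : (12:ℤ) ≠ 0) h12
  exact_mod_cast this

lemma no_sol (m₁ a s : ℕ) (ha : 1 ≤ a)
    (key : s ^ 2 = (12 * m₁ + 11) * ((a + 6 * m₁ + 5) ^ 2 + 2 * (6 * m₁ + 5) * (m₁ + 1)))
    (k : ℕ) (hk : Odd k) (u : ℕ) (hu : u = 1 ∨ u = 2)
    (hmod : (m₁ + 1) % 3 ^ (k + 1) = u * 3 ^ k) : False := by
  have h3 : Nat.Prime 3 := by norm_num
  set M := 12 * m₁ + 11 with hM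
  obtain ⟨q, hq⟩ : ∃ q, m₁ + 1 = 3 ^ (k + 1) * q + u * 3 ^ k :=
    ⟨(m₁ + 1) / 3 ^ (k + 1), by rw [← hmod]; exact (Nat.div_add_mod _ _).symm⟩
  set e := 3 * q + u with he
  have hn : m₁ + 1 = 3 ^ k * e := by
    rw [hq, he, pow_succ]; ring
  have he3 : ¬ 3 ∣ e := by omega
  set c := a + 6 * m₁ + 5 with hc
  have hc0 : c ≠ 0 := by omega
  set v := c.factorization 3 with hv
  set c' := c / 3 ^ v with hc'
  have hcc : c = 3 ^ v * c' := (Nat.ordProj_mul_ordCompl_eq_self c 3).symm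
  have hc3 : ¬ 3 ∣ c' := Nat.not_dvd_ordCompl h3 hc0
  have hM3 : M % 3 = 2 := by omega
  rcases lt_or_gt_of_ne (fun h : 2 * v = k => (Nat.not_odd_iff_even.mpr ⟨v, by omega⟩) hk)
    with hlt | hgt
  · -- 2v < k
    obtain ⟨w, hw, hw1⟩ : ∃ w, k = 2 * v + w ∧ 1 ≤ w := ⟨k - 2 * v, by omega, by omega⟩
    set B := M * c' ^ 2 + 3 ^ w * (M * 2 * (6 * m₁ + 5) * e) with hB
    have hkey2 : s ^ 2 = 3 ^ (2 * v) * B := by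
      rw [key, hn, hcc, hB, hw]
      ring
    have hBmod : B % 3 = 2 := by
      obtain ⟨w', rfl⟩ : ∃ w', w = w' + 1 := ⟨w - 1, by omega⟩
      have : B = M * c' ^ 2 + 3 * (3 ^ w' * (M * 2 * (6 * m₁ + 5) * e)) := by
        rw [hB]; ring
      rw [this, Nat.add_mul_mod_self_left, Nat.mul_mod, hM3, sq_mod_three c' hc3]
    have := (aux_sq s B (2 * v) (by omega) hkey2).2
    omega
  · -- k < 2v
    obtain ⟨w, hw, hw1⟩ : ∃ w, 2 * v = k + w ∧ 1 ≤ w := ⟨2 * v - k, by omega, by omega⟩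
    set B := 3 ^ w * (M * c' ^ 2) + M * 2 * (6 * m₁ + 5) * e with hB
    have hkey2 : s ^ 2 = 3 ^ k * B := by
      rw [key, hn, hcc, hB]
      have hpow : ((3:ℕ) ^ v) ^ 2 = 3 ^ k * 3 ^ w := by
        rw [← pow_mul, show v * 2 = k + w by omega, pow_add]
      calc M * ((3 ^ v * c') ^ 2 + 2 * (6 * m₁ + 5) * (3 ^ k * e))
          = M * (((3:ℕ) ^ v) ^ 2 * c' ^ 2 + 2 * (6 * m₁ + 5) * (3 ^ k * e)) := by ring
        _ = M * ((3 ^ k * 3 ^ w) * c' ^ 2 + 2 * (6 * m₁ + 5) * (3 ^ k * e)) := by rw [hpow]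
        _ = 3 ^ k * (3 ^ w * (M * c' ^ 2) + M * 2 * (6 * m₁ + 5) * e) := by ring
    have hB3 : ¬ 3 ∣ B := by
      intro hd
      have h1 : (3:ℕ) ∣ 3 ^ w * (M * c' ^ 2) :=
        Dvd.dvd.mul_right (dvd_pow_self 3 (by omega)) _
      have h2 : (3:ℕ) ∣ M * 2 * (6 * m₁ + 5) * e := by
        rw [hB] at hd; exact (Nat.dvd_add_right h1).mp hd
      rcases (h3.dvd_mul.mp h2) with h4 | h4
      · rcases (h3.dvd_mul.mp h4) with h5 | h5
        · rcases (h3.dvd_mul.mp h5) with h6 | h6 <;> omega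
        · omega
      · exact he3 h4
    obtain ⟨j, hj⟩ := (aux_sq s B k hB3 hkey2).1
    obtain ⟨j', hj'⟩ := hk
    omega

theorem stmt (M a s m₁ : ℕ) (hM : 1 < M) (ha : 1 ≤ a) (hs : 1 ≤ s)
    (hsum : ∑ i ∈ Finset.range M, (a + i) ^ 2 = s ^ 2)
    (hMeq : M = 12 * m₁ + 11) :
    ∀ i : ℕ, 1 ≤ i →
      ¬ m₁ ≡ 3 ^ (2 * i - 1) - 1 [MOD 3 ^ (2 * i)] ∧ ¬ m₁ ≡ 2 * 3 ^ (2 * i - 1) - 1 [MOD 3 ^ (2 * i)] := by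
  intro i hi
  have key := key_identity M a s m₁ hsum hMeq
  set k := 2 * i - 1 with hk
  have hk2 : 2 * i = k + 1 := by omega
  have hkodd : Odd k := ⟨i - 1, by omega⟩
  have hpow1 : (1:ℕ) ≤ 3 ^ k := Nat.one_le_pow _ _ (by norm_num)
  have hpowlt : 2 * 3 ^ k < 3 ^ (k + 1) := by
    rw [pow_succ]; omega
  constructor
  · intro h
    have h2 : m₁ + 1 ≡ 3 ^ k [MOD 3 ^ (k + 1)] := by
      have := Nat.ModEq.add_right 1 h
      rw [hk2] at this
      rwa [Nat.sub_add_cancel hpow1] at this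
    have hmod : (m₁ + 1) % 3 ^ (k + 1) = 1 * 3 ^ k := by
      rw [one_mul]
      have := h2
      unfold Nat.ModEq at this
      rw [this, Nat.mod_eq_of_lt (by omega)]
    exact no_sol m₁ a s ha (hMeq ▸ key) k hkodd 1 (Or.inl rfl) hmod
  · intro h
    have h2 : m₁ + 1 ≡ 2 * 3 ^ k [MOD 3 ^ (k + 1)] := by
      have := Nat.ModEq.add_right 1 h
      rw [hk2] at this
      rwa [show 2 * 3 ^ k - 1 + 1 = 2 * 3 ^ k by omega] at this
    have hmod : (m₁ + 1) % 3 ^ (k + 1) = 2 * 3 ^ k := by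
      have := h2
      unfold Nat.ModEq at this
      rw [this, Nat.mod_eq_of_lt hpowlt]
    exact no_sol m₁ a s ha (hMeq ▸ key) k hkodd 2 (Or.inr rfl) hmod
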